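/- Let n ≥ 1, let N be a positive integer, and let U ⊆ ℝⁿ be an open set such that for every x ∈ U and every j ∈ {1, …, n}, both x + 2Nπ·eⱼ ∈ U and x − 2Nπ·eⱼ ∈ U, where eⱼ is the j-th standard basis vector. Then U contains a point of ℤⁿ if and only if U is nonempty. -/

import Mathlib

/-- **Semantic core of the reduction to the reals.**  Let `n ≥ 1`, `N > 0`,
and let `U ⊆ ℝⁿ` be an open set invariant under translation by `±2Nπ` in each
coordinate.  Then `U` contains a point of `ℤⁿ` iff `U` is nonempty. -/
theorem open_invariant_contains_int_point_iff_nonempty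
    (n : ℕ) (hn : 1 ≤ n) (N : ℕ) (hN : 0 < N)
    (U : Set (Fin n → ℝ)) (hU : IsOpen U)
    (hinv : ∀ x ∈ U, ∀ j : Fin n,
      (x + (2 * N * Real.pi) • (Pi.single j 1 : Fin n → ℝ)) ∈ U ∧
        (x - (2 * N * Real.pi) • (Pi.single j 1 : Fin n → ℝ)) ∈ U) :
    (∃ z : Fin n → ℤ, (fun i => (z i : ℝ)) ∈ U) ↔ U.Nonempty := by
  set θ : ℝ := 2 * N * Real.pi with hθdef
  constructor
  · rintro ⟨z, hz⟩; exact ⟨_, hz⟩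
  rintro ⟨x, hx⟩
  -- θ is irrational
  have hθirr : Irrational θ := by
    have h2N : ((2 * N : ℕ) : ℤ) ≠ 0 := by positivity
    have := irrational_pi.intCast_mul h2N
    have heq : ((2 * N : ℕ) : ℤ) * Real.pi = θ := by push_cast; ring
    rwa [heq] at this
  -- single-coordinate invariance under integer multiples of θ
  have key : ∀ y ∈ U, ∀ j : Fin n, ∀ k : ℤ,
      y + ((k : ℝ) * θ) • (Pi.single j 1 : Fin n → ℝ) ∈ U := by
    intro y hy j k
    induction k using Int.induction_on with
    | zero => simpa using hy
    | succ k ih =>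
      have h := (hinv _ ih j).1
      have hsc : ((k + 1 : ℤ) : ℝ) * θ = (k : ℝ) * θ + θ := by push_cast; ring
      rw [hsc, add_smul, ← add_assoc]
      exact h
    | pred k ih =>
      have h := (hinv _ ih j).2
      have hsc : ((-(k : ℤ) - 1 : ℤ) : ℝ) * θ = ((-(k : ℤ) : ℤ) : ℝ) * θ - θ := by push_cast; ring
      rw [hsc, sub_smul, ← add_sub_assoc]
      exact h
  -- multi-coordinate invariance
  have multi : ∀ (k : Fin n → ℤ) (s : Finset (Fin n)), ∀ y ∈ U,
      y + ∑ j ∈ s, ((k j : ℝ) * θ) • (Pi.single j 1 : Fin n → ℝ) ∈ U := by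
    intro k s
    induction s using Finset.cons_induction with
    | empty => intro y hy; simpa using hy
    | cons j s hjs ih =>
      intro y hy
      rw [Finset.sum_cons, ← add_assoc]
      exact ih _ (key y hy j (k j))
  -- a ball around x inside U
  obtain ⟨ε, hε, hball⟩ := Metric.isOpen_iff.1 hU x hx
  -- density of ℤ + ℤθ
  have hdense : Dense ((AddSubgroup.closure ({1, θ} : Set ℝ) : AddSubgroup ℝ) : Set ℝ) := by
    rcases AddSubgroup.dense_or_cyclic (AddSubgroup.closure ({1, θ} : Set ℝ)) with hd | ⟨a, ha⟩
    · exact hd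
    · exfalso
      have h1 : (1 : ℝ) ∈ AddSubgroup.closure ({1, θ} : Set ℝ) :=
        AddSubgroup.subset_closure (by simp)
      have h2 : θ ∈ AddSubgroup.closure ({1, θ} : Set ℝ) :=
        AddSubgroup.subset_closure (by simp)
      rw [ha, AddSubgroup.mem_closure_singleton] at h1 h2
      obtain ⟨m, hm⟩ := h1
      obtain ⟨c, hc⟩ := h2
      rw [zsmul_eq_mul] at hm hc
      have hm0 : (m : ℝ) ≠ 0 := by
        intro h; rw [h, zero_mul] at hm; exact one_ne_zero hm.symm
      have : θ = ((c / m : ℚ) : ℝ) := by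
        push_cast
        field_simp
        rw [← hc, mul_assoc, mul_comm a ((m : ℤ) : ℝ), hm, mul_one]
      exact hθirr ⟨_, this.symm⟩
  -- for each coordinate, approximate x j by an element m + c * θ
  have happrox : ∀ j : Fin n, ∃ m c : ℤ, |x j - ((m : ℝ) + (c : ℝ) * θ)| < ε := by
    intro j
    have hx' : x j ∈ closure ((AddSubgroup.closure ({1, θ} : Set ℝ) : AddSubgroup ℝ) : Set ℝ) := by
      rw [hdense.closure_eq]; trivial
    obtain ⟨b, hb, hbd⟩ := Metric.mem_closure_iff.1 hx' ε hε
    obtain ⟨m, c, hmc⟩ := AddSubgroup.mem_closure_pair.1 hb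
    refine ⟨m, c, ?_⟩
    rw [zsmul_eq_mul, zsmul_eq_mul, mul_one] at hmc
    rw [hmc]
    simpa [Real.dist_eq] using hbd
  choose m c hmc using happrox
  refine ⟨m, ?_⟩
  -- the point y with y i = m i + c i * θ lies in the ball, hence in U
  set y : Fin n → ℝ := fun i => (m i : ℝ) + (c i : ℝ) * θ with hy
  have hyU : y ∈ U := by
    apply hball
    rw [Metric.mem_ball, dist_pi_lt_iff hε]
    intro i
    rw [Real.dist_eq]
    have := hmc i
    rw [abs_sub_comm] at this
    exact this
  have := multi (fun i => -(c i)) Finset.univ y hyU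
  convert this using 1
  funext i
  simp only [Pi.add_apply, Finset.sum_apply, Pi.smul_apply, smul_eq_mul, Pi.single_apply]
  rw [Finset.sum_eq_single i]
  · push_cast; simp [hy]
  · intro b _ hb; simp [hb.symm]
  · simp
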